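/- Let N ≥ 1 be an integer, ρ₁, ρ₂ ≥ 1, and let ψ : [p₁,p₂] → ℝ satisfy Assumption (P_{ρ₁,ρ₂,N}). For fixed η ∈ (0,(p₂−p₁)/2), define φ₁(p) := (ψ(p)−ψ(p₁))^{1/ρ₁} on I₁ := [p₁, p₂−η] and φ₂(p) := (ψ(p₂)−ψ(p))^{1/ρ₂} on I₂ := [p₁+η, p₂], and set s₁ := φ₁(p₂−η), s₂ := φ₂(p₁+η). Then for j = 1, 2, the map φ_j is a C^{N+1}-diffeomorphism from I_j onto [0,s_j]; in particular φ_j is C^{N+1} on I_j, bijective onto [0,s_j], and its derivative never vanishes on I_j. -/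

import Mathlib

/-!
STATEMENT 12: Let N ≥ 1, ρ₁, ρ₂ ≥ 1 and let ψ satisfy Assumption (P_{ρ₁,ρ₂,N}). For fixed
η ∈ (0,(p₂−p₁)/2) define φ₁(p) := (ψ(p)−ψ(p₁))^{1/ρ₁} on I₁ = [p₁,p₂−η], φ₂(p) :=
(ψ(p₂)−ψ(p))^{1/ρ₂} on I₂ = [p₁+η,p₂], s₁ := φ₁(p₂−η), s₂ := φ₂(p₁+η). Then each φ_j is a
C^{N+1}-diffeomorphism from I_j onto [0,s_j]: it is C^{N+1} on I_j, bijective from I_j onto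
[0,s_j], and its derivative never vanishes on I_j.
-/

open Set MeasureTheory intervalIntegral

namespace St12

lemma cont_rpow {μ : ℝ} (hμ : 0 ≤ μ) : Continuous fun t : ℝ => t ^ μ :=
  continuous_iff_continuousAt.2 fun x => Real.continuousAt_rpow_const x μ (Or.inr hμ)

noncomputable def pr (a b q : ℝ) : ℝ := max a (min b q)

lemma pr_mem {a b : ℝ} (hab : a ≤ b) (q : ℝ) : pr a b q ∈ Icc a b :=
  ⟨le_max_left _ _, max_le hab (min_le_left _ _)⟩

lemma pr_eq {a b q : ℝ} (hq : q ∈ Icc a b) : pr a b q = q := by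
  simp only [pr, min_eq_right hq.2, max_eq_right hq.1]

lemma pr_continuous (a b : ℝ) : Continuous (pr a b) :=
  continuous_const.max (continuous_const.min continuous_id)

lemma pr_left {a b q : ℝ} (hab : a ≤ b) (hq : q ≤ a) : pr a b q = a := by
  simp only [pr, min_eq_right (hq.trans hab), max_eq_left hq]

lemma pr_right {a b q : ℝ} (hab : a ≤ b) (hq : b ≤ q) : pr a b q = b := by
  simp only [pr, min_eq_left hq, max_eq_right hab]

/-- Extension of a `C^1` function on `Icc a b` to a globally differentiable function. -/
lemma exists_ext {a b : ℝ} (hab : a < b) {v : ℝ → ℝ} (hv : ContDiffOn ℝ 1 v (Icc a b)) :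
    ∃ w : ℝ → ℝ, (∀ q ∈ Icc a b, w q = v q) ∧
      ∀ q, HasDerivAt w (derivWithin v (Icc a b) (pr a b q)) q := by
  set v' : ℝ → ℝ := derivWithin v (Icc a b) with hv'
  refine ⟨fun q => v (pr a b q) + v' (pr a b q) * (q - pr a b q), ?_, ?_⟩
  · intro q hq; simp only [pr_eq hq]; ring
  intro q
  have heqIcc : ∀ y ∈ Icc a b, v (pr a b y) + v' (pr a b y) * (y - pr a b y) = v y := by
    intro y hy; rw [pr_eq hy]; ring
  have hIic : ∀ y ≤ a, v (pr a b y) + v' (pr a b y) * (y - pr a b y)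
      = v a + v' a * (y - a) := by intro y hy; rw [pr_left hab.le hy]
  have hIci : ∀ y, b ≤ y → v (pr a b y) + v' (pr a b y) * (y - pr a b y)
      = v b + v' b * (y - b) := by intro y hy; rw [pr_right hab.le hy]
  have haffine : ∀ c : ℝ, ∀ x : ℝ, HasDerivAt (fun y => v c + v' c * (y - c)) (v' c) x := by
    intro c x
    simpa using (((hasDerivAt_id x).sub_const c).const_mul (v' c)).const_add (v c)
  -- derivative of v within Icc at points of Icc
  have hvd : ∀ x ∈ Icc a b, HasDerivWithinAt v (v' x) (Icc a b) x := fun x hx =>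
    ((hv.differentiableOn one_ne_zero) x hx).hasDerivWithinAt
  rcases lt_trichotomy q a with hqa | hqa | hqa
  · -- q < a
    rw [pr_left hab.le hqa.le]
    refine (haffine a q).congr_of_eventuallyEq ?_
    filter_upwards [Iio_mem_nhds hqa] with y hy using hIic y (le_of_lt hy)
  · -- q = a
    rw [hqa, pr_left hab.le le_rfl]
    have h1 : HasDerivWithinAt (fun y => v (pr a b y) + v' (pr a b y) * (y - pr a b y))
        (v' a) (Iic a) a := by
      refine ((haffine a a).hasDerivWithinAt).congr (fun y hy => hIic y hy) ?_
      simpa using hIic a le_rfl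
    have h2 : HasDerivWithinAt (fun y => v (pr a b y) + v' (pr a b y) * (y - pr a b y))
        (v' a) (Ici a) a := by
      have hm : HasDerivWithinAt v (v' a) (Ici a) a :=
        (hvd a (left_mem_Icc.2 hab.le)).mono_of_mem_nhdsWithin
          (Icc_mem_nhdsGE_of_mem ⟨le_rfl, hab⟩)
      refine hm.congr_of_eventuallyEq ?_ (by simpa using hIic a le_rfl)
      filter_upwards [Icc_mem_nhdsGE_of_mem (⟨le_rfl, hab⟩ : a ∈ Ico a b)] with y hy
        using heqIcc y hy
    have := h1.union h2
    rw [Iic_union_Ici] at this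
    exact hasDerivWithinAt_univ.mp this
  rcases lt_trichotomy q b with hqb | hqb | hqb
  · -- a < q < b
    rw [pr_eq ⟨hqa.le, hqb.le⟩]
    have hd : DifferentiableAt ℝ v q :=
      ((hv.differentiableOn one_ne_zero) q ⟨hqa.le, hqb.le⟩).differentiableAt
        (Icc_mem_nhds hqa hqb)
    have hder : HasDerivAt v (v' q) q := by
      rw [hv', derivWithin_of_mem_nhds (Icc_mem_nhds hqa hqb)]
      exact hd.hasDerivAt
    refine hder.congr_of_eventuallyEq ?_
    filter_upwards [Ioo_mem_nhds hqa hqb] with y hy using heqIcc y ⟨hy.1.le, hy.2.le⟩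
  · -- q = b
    rw [hqb, pr_right hab.le le_rfl]
    have h1 : HasDerivWithinAt (fun y => v (pr a b y) + v' (pr a b y) * (y - pr a b y))
        (v' b) (Iic b) b := by
      have hm : HasDerivWithinAt v (v' b) (Iic b) b :=
        (hvd b (right_mem_Icc.2 hab.le)).mono_of_mem_nhdsWithin
          (Icc_mem_nhdsLE_of_mem ⟨hab, le_rfl⟩)
      refine hm.congr_of_eventuallyEq ?_ (by simpa using hIci b le_rfl)
      filter_upwards [Icc_mem_nhdsLE_of_mem (⟨hab, le_rfl⟩ : b ∈ Ioc a b)] with y hy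
        using heqIcc y hy
    have h2 : HasDerivWithinAt (fun y => v (pr a b y) + v' (pr a b y) * (y - pr a b y))
        (v' b) (Ici b) b := by
      refine ((haffine b b).hasDerivWithinAt).congr (fun y hy => hIci y hy) ?_
      simpa using hIci b le_rfl
    have := h1.union h2
    rw [Iic_union_Ici] at this
    exact hasDerivWithinAt_univ.mp this
  · -- b < q
    rw [pr_right hab.le hqb.le]
    refine (haffine b q).congr_of_eventuallyEq ?_
    filter_upwards [Ioi_mem_nhds hqb] with y hy using hIci y (le_of_lt hy)



lemma arg_mem {a b p t : ℝ} (hp : p ∈ Icc a b) (ht : t ∈ Icc (0:ℝ) 1) :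
    a + t * (p - a) ∈ Icc a b :=
  ⟨le_add_of_nonneg_right (mul_nonneg ht.1 (sub_nonneg.2 hp.1)),
    by nlinarith [hp.2, ht.1, ht.2, sub_nonneg.2 hp.1]⟩

/-- Differentiation under the integral sign for our specific family. -/
lemma hasDerivAt_param {a μ : ℝ} (hμ : 0 ≤ μ) {w w' : ℝ → ℝ}
    (hw : ∀ q, HasDerivAt w (w' q) q) (hw' : Continuous w')
    {C : ℝ} (hC : ∀ q, |w' q| ≤ C) (p : ℝ) :
    HasDerivAt (fun p => ∫ t in (0:ℝ)..1, t ^ μ * w (a + t * (p - a)))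
      (∫ t in (0:ℝ)..1, t ^ (μ + 1) * w' (a + t * (p - a))) p := by
  have hwc : Continuous w :=
    continuous_iff_continuousAt.2 fun q => (hw q).continuousAt
  have hcont : ∀ x : ℝ, Continuous fun t : ℝ => t ^ μ * w (a + t * (x - a)) := fun x =>
    (cont_rpow hμ).mul (hwc.comp (continuous_const.add (continuous_id.mul continuous_const)))
  have hcont' : ∀ x : ℝ, Continuous fun t : ℝ => t ^ (μ + 1) * w' (a + t * (x - a)) := fun x =>
    (cont_rpow (by linarith)).mul
      (hw'.comp (continuous_const.add (continuous_id.mul continuous_const)))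
  have key := intervalIntegral.hasDerivAt_integral_of_dominated_loc_of_deriv_le
    (F := fun x t => t ^ μ * w (a + t * (x - a)))
    (F' := fun x t => t ^ (μ + 1) * w' (a + t * (x - a)))
    (x₀ := p) (bound := fun _ => C) (a := 0) (b := 1) (μ := volume) Filter.univ_mem
    (Filter.Eventually.of_forall fun x => (hcont x).aestronglyMeasurable)
    ((hcont p).intervalIntegrable 0 1)
    ((hcont' p).aestronglyMeasurable)
    ?_ (intervalIntegrable_const) ?_
  · exact key.2
  · filter_upwards with t ht x _
    rw [uIoc_of_le (zero_le_one)] at ht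
    rw [Real.norm_eq_abs, abs_mul]
    have h1 : |t ^ (μ + 1)| ≤ 1 := by
      rw [abs_of_nonneg (Real.rpow_nonneg ht.1.le _)]
      exact Real.rpow_le_one ht.1.le ht.2 (by linarith)
    calc |t ^ (μ + 1)| * |w' (a + t * (x - a))| ≤ 1 * C :=
          mul_le_mul h1 (hC _) (abs_nonneg _) one_pos.le
      _ = C := one_mul C
  · filter_upwards with t ht x _
    rw [uIoc_of_le (zero_le_one)] at ht
    have hinner : HasDerivAt (fun x : ℝ => a + t * (x - a)) t x := by
      simpa using (((hasDerivAt_id x).sub_const a).const_mul t).const_add a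
    have hcomp := ((hw (a + t * (x - a))).comp x hinner).const_mul (t ^ μ)
    have : t ^ μ * (w' (a + t * (x - a)) * t) = t ^ (μ + 1) * w' (a + t * (x - a)) := by
      rw [Real.rpow_add_one (ne_of_gt ht.1)]; ring
    rw [this] at hcomp
    exact hcomp


/-- The key induction: `C^n` smoothness of the parametric integral. -/
lemma contDiffOn_param {a b : ℝ} (hab : a < b) (n : ℕ) :
    ∀ {μ : ℝ}, 0 ≤ μ → ∀ {v : ℝ → ℝ}, ContDiffOn ℝ n v (Icc a b) →
      ContDiffOn ℝ n (fun p => ∫ t in (0:ℝ)..1, t ^ μ * v (a + t * (p - a))) (Icc a b) := by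
  induction n with
  | zero =>
    intro μ hμ v hv
    rw [show ((0:ℕ) : WithTop ℕ∞) = 0 from rfl, contDiffOn_zero] at hv ⊢
    set W : ℝ → ℝ := fun q => v (pr a b q) with hW
    have hWc : Continuous W := hv.comp_continuous (pr_continuous a b) (pr_mem hab.le)
    have hGW : Continuous fun p => ∫ t in (0:ℝ)..1, t ^ μ * W (a + t * (p - a)) := by
      apply continuous_parametric_intervalIntegral_of_continuous'
        (f := fun x t => t ^ μ * W (a + t * (x - a))) (μ := volume)
      exact ((cont_rpow hμ).comp continuous_snd).mul
        (hWc.comp (continuous_const.add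
          (continuous_snd.mul (continuous_fst.sub continuous_const))))
    refine hGW.continuousOn.congr fun p hp => ?_
    refine intervalIntegral.integral_congr fun t ht => ?_
    rw [uIcc_of_le zero_le_one] at ht
    simp only [hW, pr_eq (arg_mem hp ht)]
  | succ n IH =>
    intro μ hμ v hv
    have hud := uniqueDiffOn_Icc hab
    have hv1 : ContDiffOn ℝ 1 v (Icc a b) := hv.of_le (by exact_mod_cast Nat.one_le_iff_ne_zero.2 (Nat.succ_ne_zero n))
    obtain ⟨w, hw_eq, hw_deriv⟩ := exists_ext hab hv1
    set v' : ℝ → ℝ := derivWithin v (Icc a b) with hv'def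
    have hv'c : ContinuousOn v' (Icc a b) :=
      hv1.continuousOn_derivWithin hud le_rfl
    have hD_cont : Continuous fun q => v' (pr a b q) :=
      hv'c.comp_continuous (pr_continuous a b) (pr_mem hab.le)
    obtain ⟨C, hC⟩ := (isCompact_Icc (a := a) (b := b)).exists_bound_of_continuousOn hv'c
    have hCb : ∀ q, |v' (pr a b q)| ≤ C := fun q => by
      simpa [Real.norm_eq_abs] using hC _ (pr_mem hab.le q)
    -- derivative of the modified integral
    have hkey : ∀ p : ℝ, HasDerivAt (fun p => ∫ t in (0:ℝ)..1, t ^ μ * w (a + t * (p - a)))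
        (∫ t in (0:ℝ)..1, t ^ (μ + 1) * v' (pr a b (a + t * (p - a)))) p := by
      intro p
      have hw' : ∀ q, HasDerivAt w (v' (pr a b q)) q := hw_deriv
      exact hasDerivAt_param hμ hw' hD_cont hCb p
    -- the two integrals agree on `Icc a b`
    have hGeq : ∀ p ∈ Icc a b, (fun p => ∫ t in (0:ℝ)..1, t ^ μ * v (a + t * (p - a))) p
        = (fun p => ∫ t in (0:ℝ)..1, t ^ μ * w (a + t * (p - a))) p := by
      intro p hp
      refine intervalIntegral.integral_congr fun t ht => ?_
      rw [uIcc_of_le zero_le_one] at ht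
      rw [hw_eq _ (arg_mem hp ht)]
    -- the candidate derivative function
    set G' : ℝ → ℝ := fun p => ∫ t in (0:ℝ)..1, t ^ (μ + 1) * v' (pr a b (a + t * (p - a)))
      with hG'def
    have hdw : ∀ p ∈ Icc a b,
        HasDerivWithinAt (fun p => ∫ t in (0:ℝ)..1, t ^ μ * v (a + t * (p - a)))
          (G' p) (Icc a b) p := by
      intro p hp
      exact ((hkey p).hasDerivWithinAt).congr hGeq (hGeq p hp)
    have hG'cd : ContDiffOn ℝ n G' (Icc a b) := by
      have hv'cd : ContDiffOn ℝ n v' (Icc a b) := by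
        refine hv.derivWithin hud ?_
        exact_mod_cast le_rfl
      have := IH (μ := μ + 1) (by linarith) hv'cd
      refine this.congr fun p hp => ?_
      refine intervalIntegral.integral_congr fun t ht => ?_
      rw [uIcc_of_le zero_le_one] at ht
      rw [pr_eq (arg_mem hp ht)]
    rw [show ((n + 1 : ℕ) : WithTop ℕ∞) = (n : WithTop ℕ∞) + 1 by push_cast; rfl]
    rw [contDiffOn_succ_iff_derivWithin hud]
    refine ⟨fun p hp => (hdw p hp).differentiableWithinAt, ?_, ?_⟩
    · intro h; exact absurd h (by simp)
    · refine hG'cd.congr fun p hp => ?_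
      exact (hdw p hp).derivWithin (hud p hp)



lemma aux (p₁ p₂ : ℝ) (hp : p₁ < p₂) (N : ℕ) (hN : 1 ≤ N)
    (ρ₁ ρ₂ : ℝ) (hρ₁ : 1 ≤ ρ₁) (hρ₂ : 1 ≤ ρ₂)
    (ψ ψt : ℝ → ℝ)
    (hψ : ContDiffOn ℝ 1 ψ (Set.Icc p₁ p₂))
    (hψt : ContDiffOn ℝ N ψt (Set.Icc p₁ p₂))
    (hψtpos : ∀ p ∈ Set.Icc p₁ p₂, 0 < ψt p)
    (hψ' : ∀ p ∈ Set.Icc p₁ p₂,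
      derivWithin ψ (Set.Icc p₁ p₂) p = (p - p₁) ^ (ρ₁ - 1) * (p₂ - p) ^ (ρ₂ - 1) * ψt p)
    (b : ℝ) (hb1 : p₁ < b) (hb2 : b < p₂) :
    ContDiffOn ℝ (N + 1) (fun p : ℝ => (ψ p - ψ p₁) ^ (1 / ρ₁)) (Set.Icc p₁ b) ∧
      Set.BijOn (fun p : ℝ => (ψ p - ψ p₁) ^ (1 / ρ₁)) (Set.Icc p₁ b)
        (Set.Icc 0 ((ψ b - ψ p₁) ^ (1 / ρ₁))) ∧
      ∀ p ∈ Set.Icc p₁ b,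
        derivWithin (fun p : ℝ => (ψ p - ψ p₁) ^ (1 / ρ₁)) (Set.Icc p₁ b) p ≠ 0 := by
  have hρ₁0 : (0:ℝ) < ρ₁ := lt_of_lt_of_le one_pos hρ₁
  have hρ₁ne : ρ₁ ≠ 0 := ne_of_gt hρ₁0
  have hρ₁1 : (0:ℝ) ≤ ρ₁ - 1 := by linarith
  have hsub : Icc p₁ b ⊆ Icc p₁ p₂ := Icc_subset_Icc le_rfl hb2.le
  have hud := uniqueDiffOn_Icc hb1
  have hNcast : (1 : WithTop ℕ∞) ≤ (N : WithTop ℕ∞) := by exact_mod_cast hN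
  set w : ℝ → ℝ := fun q => (p₂ - q) ^ (ρ₂ - 1) * ψt q with hwdef
  have hw_cd : ContDiffOn ℝ N w (Icc p₁ b) := by
    refine ContDiffOn.mul ?_ (hψt.mono hsub)
    intro q hq
    have hpos : (0:ℝ) < p₂ - q := by linarith [hq.2]
    have h1 : ContDiffAt ℝ N (fun x : ℝ => x ^ (ρ₂ - 1)) (p₂ - q) :=
      Real.contDiffAt_rpow_const_of_ne (ne_of_gt hpos)
    exact (h1.comp q ((contDiff_const.sub contDiff_id).contDiffAt)).contDiffWithinAt
  have hw_pos : ∀ q ∈ Icc p₁ b, 0 < w q := fun q hq =>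
    mul_pos (Real.rpow_pos_of_pos (by linarith [hq.2]) _) (hψtpos q (hsub hq))
  set g : ℝ → ℝ := fun p => ∫ t in (0:ℝ)..1, t ^ (ρ₁ - 1) * w (p₁ + t * (p - p₁)) with hgdef
  have hg_cd : ContDiffOn ℝ N g (Icc p₁ b) := contDiffOn_param hb1 N hρ₁1 hw_cd
  have hint_cont : ∀ p ∈ Icc p₁ b,
      ContinuousOn (fun t : ℝ => t ^ (ρ₁ - 1) * w (p₁ + t * (p - p₁))) (Icc 0 1) := by
    intro p hp
    refine ((cont_rpow hρ₁1).continuousOn).mul ?_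
    refine hw_cd.continuousOn.comp
      ((continuous_const.add (continuous_id.mul continuous_const)).continuousOn) ?_
    intro t ht; exact arg_mem hp ht
  have hg_pos : ∀ p ∈ Icc p₁ b, 0 < g p := by
    intro p hp
    refine intervalIntegral.intervalIntegral_pos_of_pos_on ?_ ?_ one_pos
    · exact ContinuousOn.intervalIntegrable
        (by rw [uIcc_of_le zero_le_one]; exact hint_cont p hp)
    · intro t ht
      exact mul_pos (Real.rpow_pos_of_pos ht.1 _)
        (hw_pos _ (arg_mem hp ⟨ht.1.le, ht.2.le⟩))
  -- globally continuous substitute for the integrand in `q`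
  set W : ℝ → ℝ := fun q => w (pr p₁ b q) with hWdef
  have hWc : Continuous W :=
    hw_cd.continuousOn.comp_continuous (pr_continuous p₁ b) (pr_mem hb1.le)
  set Φ : ℝ → ℝ := fun q => (q - p₁) ^ (ρ₁ - 1) * W q with hΦdef
  have hΦc : Continuous Φ :=
    ((cont_rpow hρ₁1).comp (continuous_id.sub continuous_const)).mul hWc
  have hΦeq : ∀ x ∈ Icc p₁ b, Φ x = (x - p₁) ^ (ρ₁ - 1) * w x := by
    intro x hx; simp only [hΦdef, hWdef, pr_eq hx]
  -- the key factorization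
  have hkey : ∀ p ∈ Icc p₁ b, ψ p - ψ p₁ = (p - p₁) ^ ρ₁ * g p := by
    intro p hp
    have step1 : ∫ q in p₁..p, Φ q = ψ p - ψ p₁ := by
      refine intervalIntegral.integral_eq_sub_of_hasDeriv_right_of_le hp.1
        (hψ.continuousOn.mono (Icc_subset_Icc le_rfl (hp.2.trans hb2.le))) ?_
        (hΦc.intervalIntegrable _ _)
      intro x hx
      have hxI : x ∈ Icc p₁ b := ⟨hx.1.le, hx.2.le.trans hp.2⟩
      have hx2 : x < p₂ := lt_of_le_of_lt hxI.2 hb2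
      have hnb : Icc p₁ p₂ ∈ nhds x := Icc_mem_nhds hx.1 hx2
      have hd : DifferentiableAt ℝ ψ x :=
        ((hψ.differentiableOn one_ne_zero) x ⟨hx.1.le, hx2.le⟩).differentiableAt hnb
      have hval : deriv ψ x = Φ x := by
        rw [← derivWithin_of_mem_nhds hnb, hψ' x ⟨hx.1.le, hx2.le⟩, hΦeq x hxI, hwdef,
          mul_assoc]
      exact (hval ▸ hd.hasDerivAt).hasDerivWithinAt
    have step2 : ∫ t in (0:ℝ)..1, (p - p₁) • Φ (p₁ + t * (p - p₁)) = ∫ q in p₁..p, Φ q := by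
      have hder : ∀ t ∈ uIcc (0:ℝ) 1,
          HasDerivAt (fun t : ℝ => p₁ + t * (p - p₁)) (p - p₁) t := by
        intro t _
        simpa using ((hasDerivAt_id t).mul_const (p - p₁)).const_add p₁
      have := intervalIntegral.integral_comp_smul_deriv hder continuousOn_const hΦc
      have h0 : p₁ + (0:ℝ) * (p - p₁) = p₁ := by ring
      have h1 : p₁ + (1:ℝ) * (p - p₁) = p := by ring
      rw [h0, h1] at this
      exact this
    have step3 : ∫ t in (0:ℝ)..1, (p - p₁) • Φ (p₁ + t * (p - p₁))
        = ((p - p₁) * (p - p₁) ^ (ρ₁ - 1)) * g p := by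
      rw [hgdef]
      rw [← intervalIntegral.integral_const_mul]
      refine intervalIntegral.integral_congr fun t ht => ?_
      rw [uIcc_of_le zero_le_one] at ht
      have harg := arg_mem hp ht
      have h2 : Φ (p₁ + t * (p - p₁)) = (t * (p - p₁)) ^ (ρ₁ - 1) * w (p₁ + t * (p - p₁)) := by
        have hq : p₁ + t * (p - p₁) - p₁ = t * (p - p₁) := by ring
        simp only [hΦdef, hWdef, pr_eq harg, hq]
      rw [smul_eq_mul, h2, Real.mul_rpow ht.1 (sub_nonneg.2 hp.1)]
      ring
    have hpow : (p - p₁) * (p - p₁) ^ (ρ₁ - 1) = (p - p₁) ^ ρ₁ := by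
      rcases eq_or_lt_of_le hp.1 with hpe | hpl
      · rw [← hpe, sub_self, Real.zero_rpow hρ₁ne, zero_mul]
      · have hxx : (0:ℝ) < p - p₁ := sub_pos.2 hpl
        have hsum : ρ₁ - 1 + 1 = ρ₁ := by ring
        rw [← hsum, Real.rpow_add_one (ne_of_gt hxx)]
        ring_nf
    rw [← step1, ← step2, step3, hpow]
  -- `g` at the left endpoint
  have hga : g p₁ = (1/ρ₁) * w p₁ := by
    have h0 : ∀ t : ℝ, p₁ + t * (p₁ - p₁) = p₁ := fun t => by ring
    have hrw : g p₁ = ∫ t in (0:ℝ)..1, t ^ (ρ₁ - 1) * w p₁ := by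
      rw [hgdef]; exact intervalIntegral.integral_congr fun t _ => by rw [h0]
    rw [hrw, intervalIntegral.integral_mul_const,
      integral_rpow (Or.inl (by linarith : (-1:ℝ) < ρ₁ - 1))]
    have hsum : ρ₁ - 1 + 1 = ρ₁ := by ring
    rw [hsum, Real.one_rpow, Real.zero_rpow hρ₁ne]
    ring
  -- the derivative identity for g
  have hgder : ∀ p ∈ Icc p₁ b,
      (p - p₁) * derivWithin g (Icc p₁ b) p = w p - ρ₁ * g p := by
    intro p hp
    have hgd : HasDerivWithinAt g (derivWithin g (Icc p₁ b) p) (Icc p₁ b) p :=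
      ((hg_cd.differentiableOn (zero_lt_one.trans_le hNcast).ne') p hp).hasDerivWithinAt
    have h1 : HasDerivWithinAt (fun p => ψ p - ψ p₁)
        ((p - p₁) ^ (ρ₁ - 1) * w p) (Icc p₁ b) p := by
      have hdw : HasDerivWithinAt ψ (derivWithin ψ (Icc p₁ p₂) p) (Icc p₁ p₂) p :=
        ((hψ.differentiableOn one_ne_zero) p (hsub hp)).hasDerivWithinAt
      have hh := (hdw.mono hsub).sub_const (ψ p₁)
      rwa [hψ' p (hsub hp), mul_assoc] at hh
    have hr : HasDerivAt (fun p : ℝ => (p - p₁) ^ ρ₁) (ρ₁ * (p - p₁) ^ (ρ₁ - 1)) p := by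
      have houter : HasDerivAt (fun x : ℝ => x ^ ρ₁) (ρ₁ * (p - p₁) ^ (ρ₁ - 1)) (p - p₁) :=
        Real.hasDerivAt_rpow_const (Or.inr hρ₁)
      simpa [Function.comp_def] using houter.comp p ((hasDerivAt_id p).sub_const p₁)
    have h2 : HasDerivWithinAt (fun p => (p - p₁) ^ ρ₁ * g p)
        (ρ₁ * (p - p₁) ^ (ρ₁ - 1) * g p + (p - p₁) ^ ρ₁ * derivWithin g (Icc p₁ b) p)
        (Icc p₁ b) p := (hr.hasDerivWithinAt).mul hgd
    have h2' : HasDerivWithinAt (fun p => ψ p - ψ p₁)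
        (ρ₁ * (p - p₁) ^ (ρ₁ - 1) * g p + (p - p₁) ^ ρ₁ * derivWithin g (Icc p₁ b) p)
        (Icc p₁ b) p := h2.congr (fun y hy => hkey y hy) (hkey p hp)
    have heq := (h1.derivWithin (hud p hp)).symm.trans (h2'.derivWithin (hud p hp))
    rcases eq_or_lt_of_le hp.1 with hpe | hpl
    · subst hpe
      rw [sub_self, zero_mul, hga]
      field_simp
      ring
    · have hxx : (0:ℝ) < p - p₁ := sub_pos.2 hpl
      have hXpos : (0:ℝ) < (p - p₁) ^ (ρ₁ - 1) := Real.rpow_pos_of_pos hxx _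
      have hsum : ρ₁ - 1 + 1 = ρ₁ := by ring
      have hsplit : (p - p₁) ^ ρ₁ = (p - p₁) ^ (ρ₁ - 1) * (p - p₁) := by
        rw [← hsum, Real.rpow_add_one (ne_of_gt hxx)]
        ring_nf
      rw [hsplit] at heq
      have h3 : (p - p₁) ^ (ρ₁ - 1) * ((p - p₁) * derivWithin g (Icc p₁ b) p)
          = (p - p₁) ^ (ρ₁ - 1) * (w p - ρ₁ * g p) := by linear_combination -heq
      exact mul_left_cancel₀ (ne_of_gt hXpos) h3
  -- the closed form of the derivative of φ₁
  set D : ℝ → ℝ := fun p => (1/ρ₁) * (w p * g p ^ (1/ρ₁ - 1)) with hDdef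
  have hDpos : ∀ p ∈ Icc p₁ b, 0 < D p := fun p hp =>
    mul_pos (by positivity) (mul_pos (hw_pos p hp) (Real.rpow_pos_of_pos (hg_pos p hp) _))
  have hphi : ∀ p ∈ Icc p₁ b, (ψ p - ψ p₁) ^ (1/ρ₁) = (p - p₁) * g p ^ (1/ρ₁) := by
    intro p hp
    rw [hkey p hp,
      Real.mul_rpow (Real.rpow_nonneg (sub_nonneg.2 hp.1) _) (hg_pos p hp).le,
      ← Real.rpow_mul (sub_nonneg.2 hp.1)]
    have : ρ₁ * (1/ρ₁) = 1 := by field_simp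
    rw [this, Real.rpow_one]
  have hDd : ∀ p ∈ Icc p₁ b,
      HasDerivWithinAt (fun p => (ψ p - ψ p₁) ^ (1/ρ₁)) (D p) (Icc p₁ b) p := by
    intro p hp
    have hgd : HasDerivWithinAt g (derivWithin g (Icc p₁ b) p) (Icc p₁ b) p :=
      ((hg_cd.differentiableOn (zero_lt_one.trans_le hNcast).ne') p hp).hasDerivWithinAt
    have hrp : HasDerivWithinAt (fun p => g p ^ (1/ρ₁))
        (derivWithin g (Icc p₁ b) p * (1/ρ₁) * g p ^ (1/ρ₁ - 1)) (Icc p₁ b) p :=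
      hgd.rpow_const (Or.inl (ne_of_gt (hg_pos p hp)))
    have hprod := (((hasDerivAt_id p).sub_const p₁).hasDerivWithinAt).mul hrp
    have hg1 : g p ^ (1/ρ₁) = g p ^ (1/ρ₁ - 1) * g p := by
      have hsum : 1/ρ₁ - 1 + 1 = 1/ρ₁ := by ring
      rw [← hsum, Real.rpow_add_one (ne_of_gt (hg_pos p hp))]
      ring_nf
    have hscal : (1/ρ₁) * ρ₁ = 1 := one_div_mul_cancel hρ₁ne
    have h2 := hgder p hp
    have hval : 1 * g p ^ (1/ρ₁)
        + (p - p₁) * (derivWithin g (Icc p₁ b) p * (1/ρ₁) * g p ^ (1/ρ₁ - 1)) = D p := by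
      simp only [hDdef]
      linear_combination hg1 + ((1/ρ₁) * g p ^ (1/ρ₁ - 1)) * h2
        - (g p ^ (1/ρ₁ - 1) * g p) * hscal
    have hfinal : HasDerivWithinAt (fun p => (p - p₁) * g p ^ (1/ρ₁)) (D p) (Icc p₁ b) p := by
      rw [← hval]; exact hprod
    exact hfinal.congr (fun y hy => hphi y hy) (hphi p hp)
  have hD_cd : ContDiffOn ℝ N D (Icc p₁ b) := by
    refine contDiffOn_const.mul (hw_cd.mul ?_)
    intro p hp
    exact (hg_cd p hp).rpow_const_of_ne (ne_of_gt (hg_pos p hp))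
  have hCD : ContDiffOn ℝ (N + 1) (fun p : ℝ => (ψ p - ψ p₁) ^ (1 / ρ₁)) (Icc p₁ b) := by
    rw [contDiffOn_succ_iff_derivWithin hud]
    refine ⟨fun p hp => (hDd p hp).differentiableWithinAt,
      fun h => absurd h (WithTop.natCast_ne_top N), ?_⟩
    exact hD_cd.congr fun p hp => (hDd p hp).derivWithin (hud p hp)
  have hder_ne : ∀ p ∈ Icc p₁ b,
      derivWithin (fun p => (ψ p - ψ p₁) ^ (1/ρ₁)) (Icc p₁ b) p ≠ 0 := by
    intro p hp
    rw [(hDd p hp).derivWithin (hud p hp)]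
    exact ne_of_gt (hDpos p hp)
  have hcont : ContinuousOn (fun p : ℝ => (ψ p - ψ p₁) ^ (1/ρ₁)) (Icc p₁ b) :=
    hCD.continuousOn
  have hmono : StrictMonoOn (fun p : ℝ => (ψ p - ψ p₁) ^ (1/ρ₁)) (Icc p₁ b) := by
    refine strictMonoOn_of_deriv_pos (convex_Icc p₁ b) hcont ?_
    intro x hx
    rw [interior_Icc] at hx
    have hxI : x ∈ Icc p₁ b := Ioo_subset_Icc_self hx
    have hd := (hDd x hxI).hasDerivAt (Icc_mem_nhds hx.1 hx.2)
    rw [hd.deriv]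
    exact hDpos x hxI
  have hzero : (ψ p₁ - ψ p₁ : ℝ) ^ (1/ρ₁) = 0 := by
    rw [sub_self, Real.zero_rpow (one_div_ne_zero hρ₁ne)]
  refine ⟨hCD, ⟨?_, hmono.injOn, ?_⟩, hder_ne⟩
  · intro p hp
    constructor
    · rw [← hzero]
      exact hmono.monotoneOn (left_mem_Icc.2 hb1.le) hp hp.1
    · exact hmono.monotoneOn hp (right_mem_Icc.2 hb1.le) hp.2
  · intro y hy
    have hsur := intermediate_value_Icc hb1.le hcont
    apply hsur
    refine ⟨?_, hy.2⟩
    rw [hzero]; exact hy.1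

end St12


theorem statement12 (p₁ p₂ : ℝ) (hp : p₁ < p₂) (N : ℕ) (hN : 1 ≤ N)
    (ρ₁ ρ₂ : ℝ) (hρ₁ : 1 ≤ ρ₁) (hρ₂ : 1 ≤ ρ₂)
    (ψ ψt : ℝ → ℝ)
    (hψ : ContDiffOn ℝ 1 ψ (Set.Icc p₁ p₂))
    (hψt : ContDiffOn ℝ N ψt (Set.Icc p₁ p₂))
    (hψtpos : ∀ p ∈ Set.Icc p₁ p₂, 0 < ψt p)
    (hψ' : ∀ p ∈ Set.Icc p₁ p₂,
      derivWithin ψ (Set.Icc p₁ p₂) p = (p - p₁) ^ (ρ₁ - 1) * (p₂ - p) ^ (ρ₂ - 1) * ψt p)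
    (η : ℝ) (hη : η ∈ Set.Ioo 0 ((p₂ - p₁) / 2)) :
    (ContDiffOn ℝ (N + 1) (fun p : ℝ => (ψ p - ψ p₁) ^ (1 / ρ₁)) (Set.Icc p₁ (p₂ - η)) ∧
      Set.BijOn (fun p : ℝ => (ψ p - ψ p₁) ^ (1 / ρ₁)) (Set.Icc p₁ (p₂ - η))
        (Set.Icc 0 ((ψ (p₂ - η) - ψ p₁) ^ (1 / ρ₁))) ∧
      ∀ p ∈ Set.Icc p₁ (p₂ - η),
        derivWithin (fun p : ℝ => (ψ p - ψ p₁) ^ (1 / ρ₁)) (Set.Icc p₁ (p₂ - η)) p ≠ 0) ∧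
    (ContDiffOn ℝ (N + 1) (fun p : ℝ => (ψ p₂ - ψ p) ^ (1 / ρ₂)) (Set.Icc (p₁ + η) p₂) ∧
      Set.BijOn (fun p : ℝ => (ψ p₂ - ψ p) ^ (1 / ρ₂)) (Set.Icc (p₁ + η) p₂)
        (Set.Icc 0 ((ψ p₂ - ψ (p₁ + η)) ^ (1 / ρ₂))) ∧
      ∀ p ∈ Set.Icc (p₁ + η) p₂,
        derivWithin (fun p : ℝ => (ψ p₂ - ψ p) ^ (1 / ρ₂)) (Set.Icc (p₁ + η) p₂) p ≠ 0) := by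
  open Set in
  obtain ⟨hη1, hη2⟩ := hη
  have hb1 : p₁ < p₂ - η := by linarith
  have hb2 : p₂ - η < p₂ := by linarith
  have hb1' : p₁ + η < p₂ := by linarith
  refine ⟨St12.aux p₁ p₂ hp N hN ρ₁ ρ₂ hρ₁ hρ₂ ψ ψt hψ hψt hψtpos hψ' (p₂ - η) hb1 hb2, ?_⟩
  -- Reflection `r q = p₁ + p₂ - q` reduces the second half to `aux`.
  set r : ℝ → ℝ := fun q => p₁ + p₂ - q with hrdef
  have hrr : ∀ q, r (r q) = q := fun q => by simp only [hrdef]; ring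
  have hrcd : ContDiff ℝ (⊤ : ℕ∞) r := contDiff_const.sub contDiff_id
  have hrmaps : Set.MapsTo r (Icc p₁ p₂) (Icc p₁ p₂) := fun q hq =>
    ⟨by simp only [hrdef]; linarith [hq.2], by simp only [hrdef]; linarith [hq.1]⟩
  set Ψ : ℝ → ℝ := fun q => ψ p₂ - ψ (r q) with hΨdef
  set Ψt : ℝ → ℝ := fun q => ψt (r q) with hΨtdef
  have hΨcd : ContDiffOn ℝ 1 Ψ (Icc p₁ p₂) :=
    contDiffOn_const.sub (hψ.comp ((contDiff_const.sub contDiff_id).contDiffOn) hrmaps)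
  have hΨtcd : ContDiffOn ℝ N Ψt (Icc p₁ p₂) :=
    hψt.comp ((contDiff_const.sub contDiff_id).contDiffOn) hrmaps
  have hΨtpos : ∀ q ∈ Icc p₁ p₂, 0 < Ψt q := fun q hq => hψtpos _ (hrmaps hq)
  have hΨ' : ∀ q ∈ Icc p₁ p₂, derivWithin Ψ (Icc p₁ p₂) q
      = (q - p₁) ^ (ρ₂ - 1) * (p₂ - q) ^ (ρ₁ - 1) * Ψt q := by
    intro q hq
    have hrq : r q ∈ Icc p₁ p₂ := hrmaps hq
    have hψd : HasDerivWithinAt ψ (derivWithin ψ (Icc p₁ p₂) (r q)) (Icc p₁ p₂) (r q) :=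
      ((hψ.differentiableOn one_ne_zero) _ hrq).hasDerivWithinAt
    have hrd : HasDerivWithinAt r (-1) (Icc p₁ p₂) q := by
      simpa using ((hasDerivAt_id q).const_sub (p₁ + p₂)).hasDerivWithinAt
    have hcomp : HasDerivWithinAt (fun x => ψ (r x))
        (derivWithin ψ (Icc p₁ p₂) (r q) * (-1)) (Icc p₁ p₂) q :=
      HasDerivWithinAt.comp q hψd hrd hrmaps
    have hΨd : HasDerivWithinAt Ψ (derivWithin ψ (Icc p₁ p₂) (r q)) (Icc p₁ p₂) q := by
      have := hcomp.const_sub (ψ p₂)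
      exact this.congr_deriv (by ring)
    rw [hΨd.derivWithin (uniqueDiffOn_Icc hp q hq), hψ' _ hrq]
    have e1 : r q - p₁ = p₂ - q := by simp only [hrdef]; ring
    have e2 : p₂ - r q = q - p₁ := by simp only [hrdef]; ring
    rw [e1, e2, hΨtdef]
    ring
  have part2 := St12.aux p₁ p₂ hp N hN ρ₂ ρ₁ hρ₂ hρ₁ Ψ Ψt hΨcd hΨtcd hΨtpos hΨ'
    (p₂ - η) hb1 hb2
  have hrp₁ : r p₁ = p₂ := by simp only [hrdef]; ring
  have hfun : (fun p : ℝ => (ψ p₂ - ψ p) ^ (1 / ρ₂))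
      = (fun q : ℝ => (Ψ q - Ψ p₁) ^ (1 / ρ₂)) ∘ r := by
    funext p
    simp only [Function.comp_apply, hΨdef, hrr p, hrp₁, sub_self, sub_zero]
  have hmap21 : Set.MapsTo r (Icc (p₁ + η) p₂) (Icc p₁ (p₂ - η)) := fun q hq =>
    ⟨by simp only [hrdef]; linarith [hq.2], by simp only [hrdef]; linarith [hq.1]⟩
  have hmap12 : Set.MapsTo r (Icc p₁ (p₂ - η)) (Icc (p₁ + η) p₂) := fun q hq =>
    ⟨by simp only [hrdef]; linarith [hq.2], by simp only [hrdef]; linarith [hq.1]⟩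
  have hrbij : Set.BijOn r (Icc (p₁ + η) p₂) (Icc p₁ (p₂ - η)) :=
    ⟨hmap21, fun x _ y _ h => by simp only [hrdef] at h; linarith,
      fun y hy => ⟨r y, hmap12 hy, hrr y⟩⟩
  have hend : Ψ (p₂ - η) - Ψ p₁ = ψ p₂ - ψ (p₁ + η) := by
    have harg : r (p₂ - η) = p₁ + η := by simp only [hrdef]; ring
    simp only [hΨdef, harg, hrp₁, sub_self, sub_zero]
  refine ⟨?_, ?_, ?_⟩
  · rw [hfun]
    exact part2.1.comp ((contDiff_const.sub contDiff_id).contDiffOn) hmap21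
  · rw [hfun]
    have := part2.2.1
    rw [hend] at this
    exact this.comp hrbij
  · intro p hpI
    have hq := hmap21 hpI
    have hφd : HasDerivWithinAt (fun q : ℝ => (Ψ q - Ψ p₁) ^ (1 / ρ₂))
        (derivWithin (fun q : ℝ => (Ψ q - Ψ p₁) ^ (1 / ρ₂)) (Icc p₁ (p₂ - η)) (r p))
        (Icc p₁ (p₂ - η)) (r p) :=
      ((part2.1.differentiableOn (by exact_mod_cast Nat.succ_ne_zero N)) _ hq).hasDerivWithinAt
    have hrd : HasDerivWithinAt r (-1) (Icc (p₁ + η) p₂) p := by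
      simpa using ((hasDerivAt_id p).const_sub (p₁ + p₂)).hasDerivWithinAt
    have hcomp := HasDerivWithinAt.comp p hφd hrd hmap21
    rw [hfun, hcomp.derivWithin (uniqueDiffOn_Icc hb1' p hpI)]
    simp only [mul_neg_one, neg_ne_zero]
    exact part2.2.2 (r p) hq
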